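/- Every H-polyhedron A ⊆ ℝᵈ is a V-polyhedron: there exist a finite set of points Y ⊆ ℝᵈ and a finite set of vectors V ⊆ ℝᵈ such that A = conv(Y) + cone(V). -/

import Mathlib

open RealInnerProductSpace Pointwise

/-- The cone (set of nonnegative linear combinations) generated by the vectors
`v 0, …, v (q-1)`. -/
def coneOf {d q : ℕ} (v : Fin q → EuclideanSpace ℝ (Fin d)) :
    Set (EuclideanSpace ℝ (Fin d)) :=
  {x | ∃ μ : Fin q → ℝ, (∀ j, 0 ≤ μ j) ∧ x = ∑ j, μ j • v j}

/-- An `H`-polyhedron: a finite intersection of closed half-spaces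
`{x | ⟪a, x⟫ ≤ b}` (the empty intersection, i.e. `ℝᵈ`, is allowed). -/
def IsHPolyhedron {d : ℕ} (A : Set (EuclideanSpace ℝ (Fin d))) : Prop :=
  ∃ (p : ℕ) (a : Fin p → EuclideanSpace ℝ (Fin d)) (b : Fin p → ℝ),
    A = ⋂ i, {x : EuclideanSpace ℝ (Fin d) | ⟪a i, x⟫ ≤ b i}

namespace VRep

abbrev E (d : ℕ) := EuclideanSpace ℝ (Fin d)
def coneOf' {d : ℕ} {ι : Type} [Fintype ι] (v : ι → E d) : Set (E d) :=
  {x | ∃ μ : ι → ℝ, (∀ j, 0 ≤ μ j) ∧ x = ∑ j, μ j • v j}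

lemma gen_mem_coneOf' {d : ℕ} {ι : Type} [Fintype ι] [DecidableEq ι]
    (v : ι → E d) (j : ι) : v j ∈ coneOf' v := by
  refine ⟨fun i => if i = j then 1 else 0, by intro i; positivity, ?_⟩
  simp [ite_smul]

lemma sum_mem_coneOf' {d : ℕ} {ι κ : Type} [Fintype ι] [Fintype κ]
    (v : ι → E d) (w : κ → E d) (θ : κ → ℝ) (hθ : ∀ k, 0 ≤ θ k)
    (hw : ∀ k, w k ∈ coneOf' v) : (∑ k, θ k • w k) ∈ coneOf' v := by
  classical
  choose μ hμ hμeq using hw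
  refine ⟨fun i => ∑ k, θ k * μ k i,
    fun i => Finset.sum_nonneg fun k _ => mul_nonneg (hθ k) (hμ k i), ?_⟩
  calc ∑ k, θ k • w k = ∑ k, ∑ i, (θ k * μ k i) • v i := by
        refine Finset.sum_congr rfl fun k _ => ?_
        rw [hμeq k, Finset.smul_sum]
        exact Finset.sum_congr rfl fun i _ => smul_smul _ _ _
    _ = ∑ i, ∑ k, (θ k * μ k i) • v i := Finset.sum_comm
    _ = ∑ i, (∑ k, θ k * μ k i) • v i := by
        refine Finset.sum_congr rfl fun i _ => ?_
        rw [Finset.sum_smul]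

lemma fm_step {d q : ℕ} (v : Fin q → E d) (a : E d) :
    ∃ (w : (Fin q ⊕ Fin q × Fin q) → E d),
      coneOf' v ∩ {x | ⟪a, x⟫ ≤ 0} = coneOf' w := by
  classical
  set α : Fin q → ℝ := fun j => ⟪a, v j⟫ with hα
  set w : (Fin q ⊕ Fin q × Fin q) → E d := Sum.elim
      (fun j => if α j ≤ 0 then v j else 0)
      (fun jk => if 0 < α jk.1 ∧ α jk.2 < 0
        then α jk.1 • v jk.2 - α jk.2 • v jk.1 else 0) with hw
  refine ⟨w, Set.Subset.antisymm ?_ ?_⟩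
  · -- hard direction
    rintro x ⟨⟨μ, hμ, rfl⟩, hx⟩
    simp only [Set.mem_setOf_eq] at hx
    set SP : ℝ := ∑ j, if 0 < α j then μ j * α j else 0 with hSP
    set SN : ℝ := ∑ j, if α j < 0 then μ j * (-α j) else 0 with hSN
    have hSPnn : 0 ≤ SP := Finset.sum_nonneg fun j _ => by
      split_ifs with h
      · exact mul_nonneg (hμ j) h.le
      · exact le_rfl
    have hSNnn : 0 ≤ SN := Finset.sum_nonneg fun j _ => by
      split_ifs with h
      · exact mul_nonneg (hμ j) (by linarith)
      · exact le_rfl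
    have hinner : ⟪a, ∑ j, μ j • v j⟫ = SP - SN := by
      rw [inner_sum]
      simp only [real_inner_smul_right]
      rw [hSP, hSN, ← Finset.sum_sub_distrib]
      refine Finset.sum_congr rfl fun j _ => ?_
      rcases lt_trichotomy (α j) 0 with h | h | h
      · rw [if_neg (by linarith), if_pos h]; ring
      · have h' : ⟪a, v j⟫ = 0 := h
        rw [if_neg (by simp [h]), if_neg (by simp [h]), h']; ring
      · rw [if_pos h, if_neg (by linarith)]; ring
    have hSPSN : SP ≤ SN := by rw [hinner] at hx; linarith
    by_cases hSP0 : SP = 0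
    · have hz : ∀ j, 0 < α j → μ j = 0 := by
        intro j hj
        have h0 := (Finset.sum_eq_zero_iff_of_nonneg (fun j (_ : j ∈ Finset.univ) => by
          split_ifs with h
          · exact mul_nonneg (hμ j) h.le
          · exact le_rfl : ∀ j ∈ Finset.univ, 0 ≤ if 0 < α j then μ j * α j else 0)).mp
          hSP0 j (Finset.mem_univ j)
        rw [if_pos hj] at h0
        have := mul_eq_zero.mp h0
        rcases this with h | h
        · exact h
        · exact absurd h (ne_of_gt hj)
      refine ⟨Sum.elim μ 0, ?_, ?_⟩
      · rintro (j | jk)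
        · exact hμ j
        · exact le_refl 0
      · rw [Fintype.sum_sum_type]
        simp only [Sum.elim_inl, Sum.elim_inr, Pi.zero_apply, zero_smul,
          Finset.sum_const_zero, add_zero, hw]
        refine Finset.sum_congr rfl fun j _ => ?_
        by_cases h : α j ≤ 0
        · rw [if_pos h]
        · rw [if_neg h, hz j (lt_of_not_ge h), smul_zero, zero_smul]
    · have hSPpos : 0 < SP := lt_of_le_of_ne hSPnn (Ne.symm hSP0)
      have hSNpos : 0 < SN := lt_of_lt_of_le hSPpos hSPSN
      refine ⟨Sum.elim (fun j => if α j < 0 then μ j * (1 - SP / SN) else μ j)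
        (fun jk => if 0 < α jk.1 ∧ α jk.2 < 0 then μ jk.1 * μ jk.2 / SN else 0),
        ?_, ?_⟩
      · rintro (j | jk)
        · simp only [Sum.elim_inl]
          split_ifs with h
          · have : SP / SN ≤ 1 := (div_le_one hSNpos).mpr hSPSN
            exact mul_nonneg (hμ j) (by linarith)
          · exact hμ j
        · simp only [Sum.elim_inr]
          split_ifs with h
          · exact div_nonneg (mul_nonneg (hμ _) (hμ _)) hSNpos.le
          · exact le_refl 0
      · rw [Fintype.sum_sum_type]
        simp only [Sum.elim_inl, Sum.elim_inr, hw]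
        -- compute the (inr) double sum
        have hinr : (∑ jk : Fin q × Fin q,
            (if 0 < α jk.1 ∧ α jk.2 < 0 then μ jk.1 * μ jk.2 / SN else 0) •
              (if 0 < α jk.1 ∧ α jk.2 < 0
                then α jk.1 • v jk.2 - α jk.2 • v jk.1 else 0))
            = (∑ m, (if α m < 0 then μ m * SP / SN else 0) • v m)
              - ∑ m, (if 0 < α m then -μ m else 0) • v m := by
          have step1 : ∀ jk : Fin q × Fin q,
              (if 0 < α jk.1 ∧ α jk.2 < 0 then μ jk.1 * μ jk.2 / SN else 0) •
                (if 0 < α jk.1 ∧ α jk.2 < 0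
                  then α jk.1 • v jk.2 - α jk.2 • v jk.1 else 0)
              = (if 0 < α jk.1 ∧ α jk.2 < 0
                  then μ jk.1 * μ jk.2 / SN * α jk.1 else 0) • v jk.2
                - (if 0 < α jk.1 ∧ α jk.2 < 0
                  then μ jk.1 * μ jk.2 / SN * α jk.2 else 0) • v jk.1 := by
            intro jk
            split_ifs with h
            · rw [smul_sub, smul_smul, smul_smul]
            · simp
          rw [Finset.sum_congr rfl fun jk _ => step1 jk, Finset.sum_sub_distrib]
          congr 1
          · rw [Fintype.sum_prod_type_right]
            refine Finset.sum_congr rfl fun k _ => ?_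
            dsimp only
            rw [← Finset.sum_smul]
            congr 1
            by_cases hk : α k < 0
            · rw [if_pos hk]
              simp only [hk, and_true]
              have : ∀ j, (if 0 < α j then μ j * μ k / SN * α j else 0)
                  = μ k / SN * (if 0 < α j then μ j * α j else 0) := by
                intro j; split_ifs with h
                · ring
                · ring
              rw [Finset.sum_congr rfl fun j _ => this j, ← Finset.mul_sum, ← hSP]
              ring
            · simp only [hk, and_false, if_false, Finset.sum_const_zero]
          · rw [Fintype.sum_prod_type]
            refine Finset.sum_congr rfl fun j _ => ?_
            dsimp only
            rw [← Finset.sum_smul]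
            congr 1
            by_cases hj : 0 < α j
            · rw [if_pos hj]
              simp only [hj, true_and]
              have : ∀ k, (if α k < 0 then μ j * μ k / SN * α k else 0)
                  = -(μ j / SN) * (if α k < 0 then μ k * (-α k) else 0) := by
                intro k; split_ifs with h
                · ring
                · ring
              rw [Finset.sum_congr rfl fun k _ => this k, ← Finset.mul_sum, ← hSN]
              field_simp
            · simp only [hj, false_and, if_false, Finset.sum_const_zero]
        rw [hinr]
        have hinl : (∑ j, (if α j < 0 then μ j * (1 - SP / SN) else μ j) •
            (if α j ≤ 0 then v j else 0))
            = ∑ j, (if α j ≤ 0 then (if α j < 0 then μ j * (1 - SP / SN) else μ j)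
                else 0) • v j := by
          refine Finset.sum_congr rfl fun j _ => ?_
          by_cases h : α j ≤ 0
          · rw [if_pos h, if_pos h]
          · rw [if_neg h, if_neg h, smul_zero, zero_smul]
        rw [hinl, ← add_sub_assoc, ← Finset.sum_add_distrib, ← Finset.sum_sub_distrib]
        refine Finset.sum_congr rfl fun j _ => ?_
        rw [← add_smul, ← sub_smul]
        congr 1
        rcases lt_trichotomy (α j) 0 with h | h | h
        · rw [if_pos h.le, if_pos h, if_pos h, if_neg (by linarith)]
          field_simp
          ring
        · rw [if_pos h.le, if_neg (by simp [h]), if_neg (by simp [h]),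
            if_neg (by simp [h])]
          ring
        · rw [if_neg (by linarith), if_neg (by linarith), if_pos h]
          ring
  · -- easy direction
    rintro x ⟨θ, hθ, rfl⟩
    have hcv : ∀ k, w k ∈ coneOf' v := by
      rintro (j | jk)
      · simp only [hw, Sum.elim_inl]
        split_ifs with h
        · exact gen_mem_coneOf' v j
        · exact ⟨0, fun _ => le_rfl, by simp⟩
      · simp only [hw, Sum.elim_inr]
        split_ifs with h
        · refine ⟨fun i => α jk.1 * (if i = jk.2 then 1 else 0)
            + (-α jk.2) * (if i = jk.1 then 1 else 0), fun i => ?_, ?_⟩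
          · have h1 : (0:ℝ) ≤ α jk.1 := h.1.le
            have h2 : (0:ℝ) ≤ -α jk.2 := by linarith [h.2]
            positivity
          · rw [sub_eq_add_neg, ← neg_smul]
            simp only [add_smul, mul_ite, mul_one, mul_zero, ite_smul, zero_smul,
              Finset.sum_add_distrib, Finset.sum_ite_eq', Finset.mem_univ, if_pos]
        · exact ⟨0, fun _ => le_rfl, by simp⟩
    have hw0 : ∀ k, ⟪a, w k⟫ ≤ 0 := by
      rintro (j | jk)
      · simp only [hw, Sum.elim_inl]
        split_ifs with h
        · exact h
        · rw [inner_zero_right]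
      · simp only [hw, Sum.elim_inr]
        split_ifs with h
        · rw [inner_sub_right, real_inner_smul_right, real_inner_smul_right]
          have e1 : ⟪a, v jk.1⟫ = α jk.1 := rfl
          have e2 : ⟪a, v jk.2⟫ = α jk.2 := rfl
          rw [e1, e2]
          nlinarith [h.1, h.2]
        · rw [inner_zero_right]
    constructor
    · exact sum_mem_coneOf' v w θ hθ hcv
    · simp only [Set.mem_setOf_eq]
      rw [inner_sum]
      simp only [real_inner_smul_right]
      refine Finset.sum_nonpos fun k _ => ?_
      have := hw0 k
      nlinarith [hθ k]

lemma univ_eq_coneOf' {d : ℕ} :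
    (Set.univ : Set (E d)) = coneOf' (Sum.elim
      (fun i : Fin d => EuclideanSpace.single i (1:ℝ))
      (fun i : Fin d => -EuclideanSpace.single i (1:ℝ))) := by
  ext x
  simp only [Set.mem_univ, true_iff]
  refine ⟨Sum.elim (fun i => max (x i) 0) (fun i => max (-x i) 0), ?_, ?_⟩
  · rintro (i | i) <;> simp [le_max_right]
  · rw [Fintype.sum_sum_type]
    simp only [Sum.elim_inl, Sum.elim_inr]
    ext m
    have happ : ∀ (f : Fin d → E d), (∑ i, f i) m = ∑ i, f i m :=
      fun f => by rw [WithLp.ofLp_sum, Finset.sum_apply]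
    rw [show ((∑ i, max (x i) 0 • EuclideanSpace.single i (1:ℝ))
        + ∑ i, max (-x i) 0 • -EuclideanSpace.single i (1:ℝ)) m
      = (∑ i, max (x i) 0 • EuclideanSpace.single i (1:ℝ)) m
        + (∑ i, max (-x i) 0 • -EuclideanSpace.single i (1:ℝ)) m from rfl,
      happ, happ]
    have t1 : ∀ i, (max (x i) 0 • EuclideanSpace.single i (1:ℝ)) m
        = max (x i) 0 * (if m = i then 1 else 0) := by
      intro i; rw [show (max (x i) 0 • EuclideanSpace.single i (1:ℝ)) m
        = max (x i) 0 * (EuclideanSpace.single i (1:ℝ)) m from rfl,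
        EuclideanSpace.single_apply]
    have t2 : ∀ i, (max (-x i) 0 • -EuclideanSpace.single i (1:ℝ)) m
        = max (-x i) 0 * -(if m = i then 1 else 0) := by
      intro i; rw [show (max (-x i) 0 • -EuclideanSpace.single i (1:ℝ)) m
        = max (-x i) 0 * -((EuclideanSpace.single i (1:ℝ)) m) from rfl,
        EuclideanSpace.single_apply]
    rw [Finset.sum_congr rfl fun i _ => t1 i, Finset.sum_congr rfl fun i _ => t2 i]
    simp only [mul_ite, mul_one, mul_zero, mul_neg, neg_zero]
    rw [Finset.sum_ite_eq Finset.univ m (fun i => max (x i) 0),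
      Finset.sum_neg_distrib,
      Finset.sum_ite_eq Finset.univ m (fun i => max (-x i) 0)]
    simp only [Finset.mem_univ, if_pos]
    rcases le_total (x m) 0 with h | h
    · rw [max_eq_right h, max_eq_left (by linarith)]; ring
    · rw [max_eq_left h, max_eq_right (by linarith)]; ring

lemma coneOf'_reindex {d : ℕ} {ι : Type} [Fintype ι] (v : ι → E d) :
    ∃ (q : ℕ) (w : Fin q → E d), coneOf' v = coneOf w := by
  classical
  refine ⟨Fintype.card ι, v ∘ (Fintype.equivFin ι).symm, ?_⟩
  ext x
  constructor
  · rintro ⟨μ, hμ, rfl⟩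
    refine ⟨μ ∘ (Fintype.equivFin ι).symm, fun j => hμ _, ?_⟩
    exact Fintype.sum_equiv (Fintype.equivFin ι) _ _ (fun x => by simp)
  · rintro ⟨μ, hμ, rfl⟩
    refine ⟨μ ∘ (Fintype.equivFin ι), fun j => hμ _, ?_⟩
    exact Fintype.sum_equiv (Fintype.equivFin ι).symm _ _ (fun x => by simp)

lemma cone_fg (d : ℕ) : ∀ (p : ℕ) (a : Fin p → E d),
    ∃ (q : ℕ) (v : Fin q → E d), {x | ∀ i, ⟪a i, x⟫ ≤ 0} = coneOf' v := by
  intro p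
  induction p with
  | zero =>
    intro a
    obtain ⟨q, v, hv⟩ := coneOf'_reindex (Sum.elim
      (fun i : Fin d => EuclideanSpace.single i (1:ℝ))
      (fun i : Fin d => -EuclideanSpace.single i (1:ℝ)))
    refine ⟨q, v, ?_⟩
    rw [show {x : E d | ∀ i : Fin 0, ⟪a i, x⟫ ≤ 0} = Set.univ from
      Set.eq_univ_of_forall (fun x i => i.elim0), univ_eq_coneOf', hv]
    rfl
  | succ p ih =>
    intro a
    obtain ⟨q, v, hv⟩ := ih (fun i => a i.succ)
    obtain ⟨w, hw⟩ := fm_step v (a 0)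
    obtain ⟨q', v', hv'⟩ := coneOf'_reindex w
    refine ⟨q', v', ?_⟩
    have hsplit : {x : E d | ∀ i : Fin (p+1), ⟪a i, x⟫ ≤ 0}
        = ({x : E d | ∀ i : Fin p, ⟪a i.succ, x⟫ ≤ 0} ∩ {x : E d | ⟪a 0, x⟫ ≤ 0}) := by
      ext x
      constructor
      · intro h; exact ⟨fun i => h i.succ, h 0⟩
      · rintro ⟨h1, h2⟩ i
        rcases Fin.eq_zero_or_eq_succ i with rfl | ⟨j, rfl⟩
        · exact h2
        · exact h1 j
    rw [hsplit, hv, hw, hv']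
    rfl


def lift {d : ℕ} (x : E d) (t : ℝ) : E (d+1) := WithLp.toLp 2 (Fin.snoc x t)
def proj {d : ℕ} (z : E (d+1)) : E d := WithLp.toLp 2 (fun j => z j.castSucc)

lemma proj_lift {d : ℕ} (x : E d) (t : ℝ) : proj (lift x t) = x := by
  ext j
  show (Fin.snoc x t : ∀ _ : Fin (d+1), ℝ) j.castSucc = x j
  exact Fin.snoc_castSucc _ _ _

lemma lift_last {d : ℕ} (x : E d) (t : ℝ) : lift x t (Fin.last d) = t := by
  show (Fin.snoc x t : ∀ _ : Fin (d+1), ℝ) (Fin.last d) = t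
  exact Fin.snoc_last _ _

lemma inner_lift_left {d : ℕ} (c : E d) (r : ℝ) (z : E (d+1)) :
    ⟪(lift c r : E (d+1)), z⟫ = ⟪c, proj z⟫ + r * z (Fin.last d) := by
  simp only [PiLp.inner_apply, RCLike.inner_apply, starRingEnd_apply, star_trivial]
  rw [Fin.sum_univ_castSucc]
  congr 1
  · refine Finset.sum_congr rfl fun j _ => ?_
    rw [show (lift c r) j.castSucc = c j from
      Fin.snoc_castSucc (α := fun _ => ℝ) r c j]
    rfl
  · rw [lift_last, mul_comm]

lemma proj_sum_smul {d : ℕ} {ι : Type} [Fintype ι] (μ : ι → ℝ) (f : ι → E (d+1)) :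
    proj (∑ i, μ i • f i) = ∑ i, μ i • proj (f i) := by
  ext j
  rw [show proj (∑ i, μ i • f i) j = (∑ i, μ i • f i) j.castSucc from rfl,
    WithLp.ofLp_sum, WithLp.ofLp_sum, Finset.sum_apply, Finset.sum_apply]
  rfl

lemma last_sum_smul {d : ℕ} {ι : Type} [Fintype ι] (μ : ι → ℝ) (f : ι → E (d+1)) :
    (∑ i, μ i • f i) (Fin.last d) = ∑ i, μ i * f i (Fin.last d) := by
  rw [WithLp.ofLp_sum, Finset.sum_apply]
  rfl

lemma sum_split {q0 : ℕ} (P : Fin q0 → Prop) [DecidablePred P]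
    {M : Type} [AddCommMonoid M] (f : Fin q0 → M) :
    ∑ j, f j = (∑ j : {j // P j}, f j.1) + ∑ j : {j // ¬ P j}, f j.1 := by
  rw [← Finset.sum_filter_add_sum_filter_not Finset.univ P f]
  congr 1
  · exact Finset.sum_subtype _ (by simp) f
  · exact Finset.sum_subtype _ (by simp) f


end VRep

/-- Every `H`-polyhedron is a `V`-polyhedron: it can be written as
`conv(Y) + cone(V)` for finite sets `Y` of points and `V` of vectors. -/
theorem hPolyhedron_is_vPolyhedron (d : ℕ) (A : Set (EuclideanSpace ℝ (Fin d)))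
    (hA : IsHPolyhedron A) :
    ∃ (p q : ℕ) (y : Fin p → EuclideanSpace ℝ (Fin d))
      (v : Fin q → EuclideanSpace ℝ (Fin d)),
      A = convexHull ℝ (Set.range y) + coneOf v := by
  classical
  obtain ⟨p, a, b, hA⟩ := hA
  set a' : Fin (p+1) → VRep.E (d+1) :=
    Fin.cons (VRep.lift 0 (-1)) (fun i => VRep.lift (a i) (-(b i))) with ha'
  have ha'0 : a' 0 = VRep.lift 0 (-1) := rfl
  have ha's : ∀ i : Fin p, a' i.succ = VRep.lift (a i) (-(b i)) := by
    intro i; rw [ha']; exact Fin.cons_succ _ _ i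
  obtain ⟨q0, g, hg⟩ := VRep.cone_fg (d+1) (p+1) a'
  have hgen : ∀ j, ∀ i, ⟪a' i, g j⟫ ≤ 0 := by
    intro j
    have : g j ∈ {z : VRep.E (d+1) | ∀ i, ⟪a' i, z⟫ ≤ 0} := by
      rw [hg]; exact VRep.gen_mem_coneOf' g j
    exact this
  set s : Fin q0 → ℝ := fun j => g j (Fin.last d) with hs
  have hsnn : ∀ j, 0 ≤ s j := by
    intro j
    have h0 := hgen j 0
    rw [ha'0, VRep.inner_lift_left, inner_zero_left] at h0
    simp only [zero_add] at h0
    nlinarith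
  have hproj : ∀ (i : Fin p) j, ⟪a i, VRep.proj (g j)⟫ ≤ b i * s j := by
    intro i j
    have h0 := hgen j i.succ
    rw [ha's i, VRep.inner_lift_left] at h0
    nlinarith
  let P := fun j : Fin q0 => 0 < s j
  let y0 : {j // P j} → VRep.E d := fun j => (s j.1)⁻¹ • VRep.proj (g j.1)
  let v0 : {j // ¬ P j} → VRep.E d := fun j => VRep.proj (g j.1)
  have hszero : ∀ j : {j // ¬ P j}, s j.1 = 0 :=
    fun j => le_antisymm (not_lt.mp j.2) (hsnn j.1)
  have key : A = convexHull ℝ (Set.range y0) + VRep.coneOf' v0 := by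
    ext x
    rw [hA, Set.mem_iInter]
    constructor
    · intro hx
      have hmem : VRep.lift x 1 ∈ {z : VRep.E (d+1) | ∀ i, ⟪a' i, z⟫ ≤ 0} := by
        intro i
        refine Fin.cases ?_ ?_ i
        · rw [ha'0, VRep.inner_lift_left, inner_zero_left, VRep.lift_last]
          norm_num
        · intro k
          rw [ha's k, VRep.inner_lift_left, VRep.proj_lift, VRep.lift_last]
          have := hx k
          simp only [Set.mem_setOf_eq] at this
          linarith
      rw [hg] at hmem
      obtain ⟨μ, hμ, heq⟩ := hmem
      have hx_eq : x = ∑ j, μ j • VRep.proj (g j) := by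
        have h' := congrArg VRep.proj heq
        rwa [VRep.proj_lift, VRep.proj_sum_smul] at h'
      have h1 : (1:ℝ) = ∑ j, μ j * s j := by
        have h' := congrArg (fun z : VRep.E (d+1) => z (Fin.last d)) heq
        simp only at h'
        rwa [VRep.lift_last, VRep.last_sum_smul] at h'
      have h1' : (∑ j : {j // P j}, μ j.1 * s j.1) = 1 := by
        rw [VRep.sum_split P (fun j => μ j * s j)] at h1
        have hz : (∑ j : {j // ¬ P j}, μ j.1 * s j.1) = 0 :=
          Finset.sum_eq_zero fun j _ => by rw [hszero j, mul_zero]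
        rw [hz, add_zero] at h1
        exact h1.symm
      have hx_split : x = (∑ j : {j // P j}, (μ j.1 * s j.1) • y0 j)
          + ∑ j : {j // ¬ P j}, μ j.1 • v0 j := by
        rw [hx_eq, VRep.sum_split P (fun j => μ j • VRep.proj (g j))]
        congr 1
        refine Finset.sum_congr rfl fun j _ => ?_
        show μ j.1 • VRep.proj (g j.1) = (μ j.1 * s j.1) • (s j.1)⁻¹ • VRep.proj (g j.1)
        rw [smul_smul, mul_assoc, mul_inv_cancel₀ (ne_of_gt j.2), mul_one]
      have hc : (∑ j : {j // P j}, (μ j.1 * s j.1) • y0 j)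
          ∈ convexHull ℝ (Set.range y0) := by
        have hcm := Finset.centerMass_mem_convexHull (t := Finset.univ)
          (w := fun j : {j // P j} => μ j.1 * s j.1) (z := y0)
          (fun j _ => mul_nonneg (hμ j.1) (hsnn j.1))
          (by rw [h1']; norm_num)
          (fun j _ => Set.mem_range_self j)
        rwa [Finset.centerMass, h1', inv_one, one_smul] at hcm
      have hw : (∑ j : {j // ¬ P j}, μ j.1 • v0 j) ∈ VRep.coneOf' v0 :=
        ⟨fun j => μ j.1, fun j => hμ j.1, rfl⟩
      rw [hx_split]
      exact Set.add_mem_add hc hw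
    · intro hx
      obtain ⟨c, hc, w0, hw0, rfl⟩ := Set.mem_add.mp hx
      intro i
      obtain ⟨μ, hμ, rfl⟩ := hw0
      have hwle : ⟪a i, ∑ j : {j // ¬ P j}, μ j • v0 j⟫ ≤ 0 := by
        rw [inner_sum]
        refine Finset.sum_nonpos fun j _ => ?_
        rw [real_inner_smul_right]
        have h2 : ⟪a i, v0 j⟫ ≤ 0 := by
          have := hproj i j.1
          rw [hszero j, mul_zero] at this
          exact this
        nlinarith [hμ j]
      have hcle : ⟪a i, c⟫ ≤ b i := by
        have hsub : Set.range y0 ⊆ {x : VRep.E d | ⟪a i, x⟫ ≤ b i} := by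
          rintro _ ⟨j, rfl⟩
          show ⟪a i, (s j.1)⁻¹ • VRep.proj (g j.1)⟫ ≤ b i
          rw [real_inner_smul_right]
          have hp := hproj i j.1
          have hspos : 0 < s j.1 := j.2
          rw [show b i = (s j.1)⁻¹ * (b i * s j.1) by
            field_simp]
          exact mul_le_mul_of_nonneg_left hp (inv_nonneg.mpr hspos.le)
        have hconv : Convex ℝ {x : VRep.E d | ⟪a i, x⟫ ≤ b i} :=
          convex_halfSpace_le
            ⟨fun x y => inner_add_right _ _ _, fun c x => real_inner_smul_right _ _ _⟩ (b i)
        exact convexHull_min hsub hconv hc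
      show ⟪a i, c + _⟫ ≤ b i
      rw [inner_add_right]
      linarith
  obtain ⟨qv, vv, hvv⟩ := VRep.coneOf'_reindex v0
  refine ⟨Fintype.card {j // P j}, qv,
    y0 ∘ (Fintype.equivFin {j // P j}).symm, vv, ?_⟩
  rw [key, hvv]
  congr 2
  exact ((Fintype.equivFin {j // P j}).symm.surjective.range_comp y0).symm
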